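/- (Theorem 2) Let σ > 0, let p be an even positive integer, let ε > 0, let k be an even nonnegative integer, and let N be a nonnegative integer. Then |∫_ℝ p_G(x) x^k exp(−ε x^p) dx − Σ_{n=0}^{N} ((−ε)^n / n!) · (np+k−1)!! · σ^{np+k}| ≤ (ε^{N+1} / (N+1)!) · ((N+1)p + k − 1)!! · σ^{(N+1)p + k}, where j!! denotes the double factorial j(j−2)(j−4)···1 (with (−1)!! = 1). -/

import Mathlib

open MeasureTheory Real

/-- The centered Gaussian density with standard deviation `σ`. -/
noncomputable def pG (σ x : ℝ) : ℝ :=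
  (1 / (Real.sqrt (2 * Real.pi) * σ)) * Real.exp (-x ^ 2 / (2 * σ ^ 2))

open Finset in

lemma exp_neg_taylor : ∀ (N : ℕ) (t : ℝ), 0 ≤ t →
    |Real.exp (-t) - ∑ n ∈ Finset.range (N + 1), (-t) ^ n / n.factorial| ≤
      t ^ (N + 1) / (N + 1).factorial := by
  intro N
  induction N with
  | zero =>
    intro t ht
    simp only [Finset.range_one, Finset.sum_singleton, pow_zero, Nat.factorial_zero,
      Nat.cast_one, div_one, pow_one, Nat.factorial_one, zero_add, Nat.cast_ofNat]
    rw [abs_le]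
    have h1 := Real.add_one_le_exp (-t)
    have h2 := Real.exp_le_one_iff.mpr (neg_nonpos.mpr ht)
    constructor <;> nlinarith
  | succ N ih =>
    -- derivative identity
    have hGd : ∀ s : ℝ, HasDerivAt
        (fun t => Real.exp (-t) - ∑ n ∈ Finset.range (N + 2), (-t) ^ n / n.factorial)
        (-(Real.exp (-s) - ∑ n ∈ Finset.range (N + 1), (-s) ^ n / n.factorial)) s := by
      intro s
      have h1 : HasDerivAt (fun t : ℝ => Real.exp (-t)) (Real.exp (-s) * (-1)) s :=
        (Real.hasDerivAt_exp (-s)).comp s (hasDerivAt_neg s)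
      have h2 : ∀ n : ℕ, HasDerivAt (fun t : ℝ => (-t) ^ n / n.factorial)
          ((n * (-s) ^ (n - 1) * (-1)) / n.factorial) s := by
        intro n
        exact (((hasDerivAt_pow n (-s)).comp s (hasDerivAt_neg s))).div_const _
      have h3 : HasDerivAt (fun t : ℝ => ∑ n ∈ Finset.range (N + 2), (-t) ^ n / n.factorial)
          (∑ n ∈ Finset.range (N + 2), ((n : ℝ) * (-s) ^ (n - 1) * (-1)) / n.factorial) s :=
        HasDerivAt.fun_sum fun n _ => h2 n
      have hsum : (∑ n ∈ Finset.range (N + 2), ((n : ℝ) * (-s) ^ (n - 1) * (-1)) / n.factorial)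
          = -∑ m ∈ Finset.range (N + 1), (-s) ^ m / m.factorial := by
        rw [Finset.sum_range_succ']
        simp only [Nat.cast_zero, zero_mul, zero_div, add_zero, Nat.cast_succ,
          Nat.add_sub_cancel, Nat.factorial_succ, Nat.cast_mul]
        rw [← Finset.sum_neg_distrib]
        refine Finset.sum_congr rfl fun i _ => ?_
        have : (i.factorial : ℝ) ≠ 0 := Nat.cast_ne_zero.mpr i.factorial_ne_zero
        field_simp
      have := h1.sub h3
      rw [hsum] at this
      exact this.congr_deriv (by ring)
    intro t ht
    -- value at zero
    have hG0 : Real.exp (-(0:ℝ)) - ∑ n ∈ Finset.range (N + 2), (-(0:ℝ)) ^ n / n.factorial = 0 := by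
      rw [Finset.sum_range_succ']
      simp
    set G : ℝ → ℝ := fun t => Real.exp (-t) - ∑ n ∈ Finset.range (N + 2), (-t) ^ n / n.factorial
      with hGdef
    have key : ∀ c : ℝ, c = 1 ∨ c = -1 → 0 ≤ t ^ (N + 2) / (N + 2).factorial + c * G t := by
      intro c hc
      have hd : ∀ s : ℝ, HasDerivAt (fun t => t ^ (N + 2) / (N + 2).factorial + c * G t)
          (s ^ (N + 1) / (N + 1).factorial +
            c * -(Real.exp (-s) - ∑ n ∈ Finset.range (N + 1), (-s) ^ n / n.factorial)) s := by
        intro s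
        have hp : HasDerivAt (fun t : ℝ => t ^ (N + 2) / (N + 2).factorial)
            (s ^ (N + 1) / (N + 1).factorial) s := by
          have := (hasDerivAt_pow (N + 2) s).div_const ((N + 2).factorial : ℝ)
          refine this.congr_deriv ?_
          have h2 : ((N+2).factorial : ℝ) = (N+2) * (N+1).factorial := by
            rw [Nat.factorial_succ]; push_cast; ring
          rw [h2, show N + 2 - 1 = N + 1 by omega]
          push_cast
          have h3 : ((N+1).factorial : ℝ) ≠ 0 := Nat.cast_ne_zero.mpr (N+1).factorial_ne_zero
          field_simp
        exact hp.add (((hGd s)).const_mul c)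
      have hmono : MonotoneOn (fun t => t ^ (N + 2) / (N + 2).factorial + c * G t) (Set.Ici 0) := by
        apply monotoneOn_of_deriv_nonneg (convex_Ici 0)
        · exact fun x _ => ((hd x).differentiableAt).continuousAt.continuousWithinAt
        · exact fun x _ => ((hd x).differentiableAt).differentiableWithinAt
        · intro x hx
          rw [(hd x).deriv]
          rw [interior_Ici] at hx
          have hIH := ih x (le_of_lt hx)
          rcases hc with rfl | rfl
          · rw [abs_le] at hIH; nlinarith [hIH.1, hIH.2]
          · rw [abs_le] at hIH; nlinarith [hIH.1, hIH.2]
      have h0 : (fun t => t ^ (N + 2) / (N + 2).factorial + c * G t) 0 = 0 := by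
        have hg : G 0 = 0 := hG0
        simp [hg]
      have := hmono (Set.self_mem_Ici) (Set.mem_Ici.mpr ht) ht
      rw [h0] at this
      exact this
    have k1 := key 1 (Or.inl rfl)
    have k2 := key (-1) (Or.inr rfl)
    rw [abs_le]
    constructor <;> [nlinarith [k1]; nlinarith [k2]]



lemma pG_eq (σ : ℝ) (hσ : 0 < σ) : pG σ = fun x =>
    (1 / (Real.sqrt (2 * Real.pi) * σ)) * Real.exp (-(2 * σ ^ 2)⁻¹ * x ^ 2) := by
  funext x
  unfold pG
  congr 1
  ring

lemma pG_nonneg (σ : ℝ) (x : ℝ) (hσ : 0 < σ) : 0 ≤ pG σ x := by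
  unfold pG
  have : 0 < Real.sqrt (2 * Real.pi) := Real.sqrt_pos.mpr (by positivity)
  positivity

lemma integrable_pow_gauss (σ : ℝ) (hσ : 0 < σ) (j : ℕ) :
    Integrable fun x : ℝ => pG σ x * x ^ j := by
  have hb : (0:ℝ) < (2 * σ ^ 2)⁻¹ := by positivity
  have h := integrable_rpow_mul_exp_neg_mul_sq hb (s := (j : ℝ))
    (neg_one_lt_zero.trans_le (Nat.cast_nonneg j))
  simp_rw [Real.rpow_natCast] at h
  have h2 := h.const_mul (1 / (Real.sqrt (2 * Real.pi) * σ))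
  refine h2.congr (Filter.Eventually.of_forall fun x => ?_)
  rw [pG_eq σ hσ]
  ring

lemma pG_integral_one (σ : ℝ) (hσ : 0 < σ) : ∫ x : ℝ, pG σ x = 1 := by
  rw [pG_eq σ hσ]
  rw [integral_const_mul, integral_gaussian]
  have h1 : Real.pi / (2 * σ ^ 2)⁻¹ = (2 * Real.pi) * σ ^ 2 := by
    field_simp
  rw [h1, Real.sqrt_mul (show (0:ℝ) ≤ 2 * Real.pi by positivity) (σ ^ 2), Real.sqrt_sq hσ.le]
  have h2 : Real.sqrt (2 * Real.pi) ≠ 0 := by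
    positivity
  field_simp

lemma pG_moment2 (σ : ℝ) (hσ : 0 < σ) (r : ℕ) :
    ∫ x : ℝ, pG σ x * x ^ (2 * r)
      = (Nat.doubleFactorial (2 * r - 1) : ℝ) * σ ^ (2 * r) := by
  induction r with
  | zero => simpa [Nat.doubleFactorial] using pG_integral_one σ hσ
  | succ r ih =>
    have hb : (0:ℝ) < (2 * σ ^ 2)⁻¹ := by positivity
    -- integration by parts
    set u : ℝ → ℝ := fun x => x ^ (2 * r + 1) with hu_def
    set v : ℝ → ℝ := fun x => -σ ^ 2 * pG σ x with hv_def
    have hu : ∀ x : ℝ, HasDerivAt u ((2 * r + 1 : ℕ) * x ^ (2 * r)) x := by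
      intro x
      simpa using hasDerivAt_pow (2 * r + 1) x
    have hv : ∀ x : ℝ, HasDerivAt v (x * pG σ x) x := by
      intro x
      have h1 : HasDerivAt (fun y : ℝ => -(2 * σ ^ 2)⁻¹ * y ^ 2)
          (-(2 * σ ^ 2)⁻¹ * (2 * x)) x := by
        have h0 := (hasDerivAt_pow 2 x).const_mul (-(2 * σ ^ 2)⁻¹)
        refine h0.congr_deriv ?_
        norm_num
      have h2 := (h1.exp).const_mul
        (-σ ^ 2 * (1 / (Real.sqrt (2 * Real.pi) * σ)))
      have heq : v = fun y : ℝ =>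
          (-σ ^ 2 * (1 / (Real.sqrt (2 * Real.pi) * σ))) * Real.exp (-(2 * σ ^ 2)⁻¹ * y ^ 2) := by
        funext y
        rw [hv_def, pG_eq σ hσ]
        ring
      rw [heq]
      refine h2.congr_deriv ?_
      rw [pG_eq σ hσ]
      have hσ' : σ ≠ 0 := hσ.ne'
      field_simp
    have hint1 : Integrable (u * fun x => x * pG σ x) := by
      refine (integrable_pow_gauss σ hσ (2 * r + 2)).congr
        (Filter.Eventually.of_forall fun x => ?_)
      simp only [hu_def, Pi.mul_apply]
      ring
    have hint2 : Integrable ((fun x : ℝ => (2 * r + 1 : ℕ) * x ^ (2 * r)) * v) := by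
      refine ((integrable_pow_gauss σ hσ (2 * r)).const_mul
        ((2 * r + 1 : ℕ) * (-σ ^ 2))).congr (Filter.Eventually.of_forall fun x => ?_)
      simp only [hv_def, Pi.mul_apply]
      ring
    have hint3 : Integrable (u * v) := by
      refine ((integrable_pow_gauss σ hσ (2 * r + 1)).const_mul (-σ ^ 2)).congr
        (Filter.Eventually.of_forall fun x => ?_)
      simp only [hu_def, hv_def, Pi.mul_apply]
      ring
    have hparts := integral_mul_deriv_eq_deriv_mul_of_integrable (fun x _ => hu x) (fun x _ => hv x) hint1 hint2 hint3
    -- hparts : ∫ x, u x * (x * pG σ x) = - ∫ x, (2r+1) * x^(2r) * v x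
    have hL : ∫ x : ℝ, u x * (x * pG σ x) = ∫ x : ℝ, pG σ x * x ^ (2 * (r + 1)) := by
      congr 1; funext x; simp only [hu_def]; ring
    have hR : ∫ x : ℝ, ((2 * r + 1 : ℕ) : ℝ) * x ^ (2 * r) * v x
        = ((2 * r + 1 : ℕ) : ℝ) * (-σ ^ 2) * ∫ x : ℝ, pG σ x * x ^ (2 * r) := by
      rw [← integral_const_mul]
      congr 1; funext x; simp only [hv_def]; ring
    rw [hL, hR] at hparts
    rw [hparts, ih]
    have hdf : Nat.doubleFactorial (2 * (r + 1) - 1)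
        = (2 * r + 1) * Nat.doubleFactorial (2 * r - 1) := by
      cases r with
      | zero => rfl
      | succ r =>
        have h1 : 2 * (r + 1 + 1) - 1 = (2 * r + 1) + 2 := by omega
        rw [h1, Nat.doubleFactorial_add_two]
        congr 1 <;> omega
    rw [hdf]
    push_cast
    ring


lemma pG_moment (σ : ℝ) (hσ : 0 < σ) (m : ℕ) (hm : Even m) :
    ∫ x : ℝ, pG σ x * x ^ m = (Nat.doubleFactorial (m - 1) : ℝ) * σ ^ m := by
  obtain ⟨r, rfl⟩ := hm
  rw [← two_mul]
  exact pG_moment2 σ hσ r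

theorem stmt2 (σ : ℝ) (hσ : 0 < σ) (p : ℕ) (hp : 0 < p) (hpe : Even p)
    (ε : ℝ) (hε : 0 < ε) (k : ℕ) (hk : Even k) (N : ℕ) :
    |(∫ x : ℝ, pG σ x * x ^ k * Real.exp (-ε * x ^ p)) -
        ∑ n ∈ Finset.range (N + 1),
          (-ε) ^ n / (n.factorial : ℝ) *
            (Nat.doubleFactorial (n * p + k - 1) : ℝ) * σ ^ (n * p + k)| ≤
      ε ^ (N + 1) / ((N + 1).factorial : ℝ) *
        (Nat.doubleFactorial ((N + 1) * p + k - 1) : ℝ) * σ ^ ((N + 1) * p + k) := by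
  have hxp : ∀ x : ℝ, 0 ≤ x ^ p := fun x => hpe.pow_nonneg x
  have hxk : ∀ x : ℝ, 0 ≤ x ^ k := fun x => hk.pow_nonneg x
  -- integrability of the main integrand
  have hf : Integrable fun x : ℝ => pG σ x * x ^ k * Real.exp (-ε * x ^ p) := by
    refine (integrable_pow_gauss σ hσ k).mono' ?_ ?_
    · have hc : Continuous fun x : ℝ => pG σ x * x ^ k * Real.exp (-ε * x ^ p) := by
        unfold pG; fun_prop
      exact hc.aestronglyMeasurable
    · refine Filter.Eventually.of_forall fun x => ?_
      have h1 : Real.exp (-ε * x ^ p) ≤ 1 := by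
        rw [Real.exp_le_one_iff]
        have := hxp x
        nlinarith
      have h2 : 0 ≤ pG σ x * x ^ k := mul_nonneg (pG_nonneg σ x hσ) (hxk x)
      rw [Real.norm_eq_abs, abs_mul, abs_mul, abs_of_nonneg (pG_nonneg σ x hσ),
        abs_of_nonneg (hxk x), abs_of_nonneg (Real.exp_pos _).le]
      nlinarith [Real.exp_pos (-ε * x ^ p)]
  -- the partial-sum integrand
  set g : ℝ → ℝ := fun x => pG σ x * x ^ k *
      ∑ n ∈ Finset.range (N + 1), (-(ε * x ^ p)) ^ n / n.factorial with hg_def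
  have hterm : ∀ n : ℕ, (fun x : ℝ => pG σ x * x ^ k * ((-(ε * x ^ p)) ^ n / n.factorial))
      = fun x : ℝ => ((-ε) ^ n / n.factorial) * (pG σ x * x ^ (n * p + k)) := by
    intro n
    funext x
    have h1 : (-(ε * x ^ p)) ^ n = (-ε) ^ n * (x ^ p) ^ n := by
      rw [← neg_mul, mul_pow]
    rw [h1, ← pow_mul, pow_add]
    ring_nf
  have hterm_int : ∀ n : ℕ,
      Integrable fun x : ℝ => pG σ x * x ^ k * ((-(ε * x ^ p)) ^ n / n.factorial) := by
    intro n
    rw [hterm n]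
    exact (integrable_pow_gauss σ hσ (n * p + k)).const_mul _
  have hg_int : Integrable g := by
    have : g = fun x => ∑ n ∈ Finset.range (N + 1),
        pG σ x * x ^ k * ((-(ε * x ^ p)) ^ n / n.factorial) := by
      funext x
      exact Finset.mul_sum _ _ _
    rw [this]
    exact integrable_finset_sum _ fun n _ => hterm_int n
  -- identify the sum with ∫ g
  have hsum_eq : (∑ n ∈ Finset.range (N + 1),
      (-ε) ^ n / (n.factorial : ℝ) *
        (Nat.doubleFactorial (n * p + k - 1) : ℝ) * σ ^ (n * p + k)) = ∫ x : ℝ, g x := by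
    have : g = fun x => ∑ n ∈ Finset.range (N + 1),
        pG σ x * x ^ k * ((-(ε * x ^ p)) ^ n / n.factorial) := by
      funext x
      exact Finset.mul_sum _ _ _
    rw [this, integral_finset_sum _ fun n _ => hterm_int n]
    refine Finset.sum_congr rfl fun n _ => ?_
    rw [hterm n, integral_const_mul,
      pG_moment σ hσ (n * p + k) (((hpe.mul_left n)).add hk)]
    ring
  rw [hsum_eq, ← integral_sub hf hg_int]
  -- bound
  have hbound : ∀ x : ℝ,
      |pG σ x * x ^ k * Real.exp (-ε * x ^ p) - g x| ≤
        (ε ^ (N + 1) / ((N + 1).factorial : ℝ)) * (pG σ x * x ^ ((N + 1) * p + k)) := by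
    intro x
    have ht : 0 ≤ ε * x ^ p := mul_nonneg hε.le (hxp x)
    have htay := exp_neg_taylor N (ε * x ^ p) ht
    have h2 : 0 ≤ pG σ x * x ^ k := mul_nonneg (pG_nonneg σ x hσ) (hxk x)
    have hfactor : pG σ x * x ^ k * Real.exp (-ε * x ^ p) - g x =
        pG σ x * x ^ k * (Real.exp (-(ε * x ^ p)) -
          ∑ n ∈ Finset.range (N + 1), (-(ε * x ^ p)) ^ n / n.factorial) := by
      rw [hg_def, neg_mul]
      ring
    rw [hfactor, abs_mul, abs_of_nonneg h2]
    calc pG σ x * x ^ k * |Real.exp (-(ε * x ^ p)) -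
          ∑ n ∈ Finset.range (N + 1), (-(ε * x ^ p)) ^ n / n.factorial|
        ≤ pG σ x * x ^ k * ((ε * x ^ p) ^ (N + 1) / (N + 1).factorial) :=
          mul_le_mul_of_nonneg_left htay h2
      _ = (ε ^ (N + 1) / ((N + 1).factorial : ℝ)) * (pG σ x * x ^ ((N + 1) * p + k)) := by
          rw [mul_pow, ← pow_mul, pow_add]
          ring_nf
  have habs : |∫ x : ℝ, (pG σ x * x ^ k * Real.exp (-ε * x ^ p) - g x)| ≤
      ∫ x : ℝ, |pG σ x * x ^ k * Real.exp (-ε * x ^ p) - g x| :=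
    by
      have := norm_integral_le_integral_norm
        (fun x : ℝ => pG σ x * x ^ k * Real.exp (-ε * x ^ p) - g x) (μ := volume)
      simpa [Real.norm_eq_abs] using this
  refine habs.trans ?_
  have hmono : (∫ x : ℝ, |pG σ x * x ^ k * Real.exp (-ε * x ^ p) - g x|) ≤
      ∫ x : ℝ, (ε ^ (N + 1) / ((N + 1).factorial : ℝ)) * (pG σ x * x ^ ((N + 1) * p + k)) := by
    refine integral_mono ((hf.sub hg_int).abs) ?_ fun x => hbound x
    exact (integrable_pow_gauss σ hσ ((N + 1) * p + k)).const_mul _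
  refine hmono.trans ?_
  rw [integral_const_mul, pG_moment σ hσ ((N + 1) * p + k) ((hpe.mul_left (N + 1)).add hk)]
  ring_nf
  exact le_refl _
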